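/- Let h ≥ 1, d ≥ 3, P = P_{h,d}, and n ≥ 3 with 0 ≤ k ≤ n. Suppose α = (k, α_2, …, α_d) ∈ nP ∩ ℤ^d lies in the interior relative to all facets (α is in none of the sets nF for F a facet of P) and satisfies α_d ≥ 5 and -(d-4)α_i + Σ_{j≠i, 2≤j≤d-1} α_j - α_d ≤ n-6 for all i = 2,…,d-1. Then β = α - u_8 = (k-1, α_2, …, α_{d-1}, α_d - 5) belongs to (n-1)P ∩ ℤ^d. -/

import Mathlib

open Finset Pointwise

noncomputable section

/-- Cast an integer lattice point to a real point. -/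
def castPt {d : ℕ} (a : Fin d → ℤ) : Fin d → ℝ := fun i => (a i : ℝ)

/-- The cone of nonnegative real combinations of a set of vectors. -/
def coneOf {d : ℕ} (A : Set (Fin d → ℝ)) : Set (Fin d → ℝ) :=
  {x | ∃ (n : ℕ) (c : Fin n → ℝ) (v : Fin n → (Fin d → ℝ)),
    (∀ i, 0 ≤ c i) ∧ (∀ i, v i ∈ A) ∧ x = ∑ i, c i • v i}

/-- `A_P = {(α,1) : α ∈ P ∩ ℤ^d} ⊂ ℤ^(d+1)`. -/
def APts {d : ℕ} (P : Set (Fin d → ℝ)) : Set (Fin (d+1) → ℤ) :=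
  {b | b (Fin.last d) = 1 ∧ castPt (fun i : Fin d => b i.castSucc) ∈ P}

/-- The `k`-th standard unit vector (0-indexed coordinate `k`). -/
def eV (d : ℕ) (k : ℕ) : Fin d → ℤ := fun i => if i.val = k then 1 else 0

/-- `e_2 + ⋯ + e_{d-1}` (coordinates with 0 < index < d-1). -/
def eMid (d : ℕ) : Fin d → ℤ := fun i => if 0 < i.val ∧ i.val < d - 1 then 1 else 0

/-- `e_d`, the last unit vector. -/
def eD (d : ℕ) : Fin d → ℤ := eV d (d - 1)

/-- `e_1`, the first unit vector. -/
def eOne (d : ℕ) : Fin d → ℤ := eV d 0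

/-- The vertex set of the polytope `P_{h,d}`. -/
def PhdVerts (h d : ℕ) : Set (Fin d → ℤ) :=
  ({0, eD d, eMid d, (h : ℤ) • (eMid d + eD d), ((h : ℤ) - 1) • eMid d + (h : ℤ) • eD d,
    (h : ℤ) • eMid d + ((h : ℤ) - 1) • eD d, eOne d + (4 : ℤ) • eD d, eOne d + (5 : ℤ) • eD d,
    eOne d + eMid d, eOne d + eMid d + eD d} : Set (Fin d → ℤ))
  ∪ {x | ∃ i : Fin d, 0 < i.val ∧ i.val < d - 1 ∧ (x = eV d i.val ∨ x = eV d i.val + eD d)}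

/-- The polytope `P_{h,d} ⊂ ℝ^d`. -/
def Phd (h d : ℕ) : Set (Fin d → ℝ) := convexHull ℝ (castPt '' PhdVerts h d)

/-- `Σ_{2 ≤ j ≤ d-1} a_j`, the sum over the middle coordinates (integer version). -/
def midSumZ {d : ℕ} (a : Fin d → ℤ) : ℤ :=
  ∑ j ∈ Finset.univ.filter (fun j : Fin d => 0 < j.val ∧ j.val < d - 1), a j

lemma mem_smul_convexHull {d : ℕ} (V : Set (Fin d → ℝ)) (h0 : (0 : Fin d → ℝ) ∈ V)
    {r : ℝ} (hr : 0 < r) {ι : Type} [Fintype ι] (c : ι → ℝ) (v : ι → Fin d → ℝ)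
    (hc : ∀ i, 0 ≤ c i) (hv : ∀ i, v i ∈ V) (hsum : ∑ i, c i ≤ r) :
    (∑ i, c i • v i) ∈ r • convexHull ℝ V := by
  have key : (r⁻¹ • ∑ i, c i • v i) ∈ convexHull ℝ V := by
    have hs := (convex_convexHull ℝ V).sum_mem
      (t := (Finset.univ : Finset (Option ι)))
      (w := fun o => Option.elim o (1 - r⁻¹ * ∑ i, c i) (fun i => r⁻¹ * c i))
      (z := fun o => Option.elim o 0 v)
      (fun o _ => by
        cases o with
        | none =>
          show (0:ℝ) ≤ 1 - r⁻¹ * ∑ i, c i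
          rw [sub_nonneg, ← div_eq_inv_mul, div_le_one hr]
          exact hsum
        | some i =>
          show (0:ℝ) ≤ r⁻¹ * c i
          exact mul_nonneg (inv_nonneg.2 hr.le) (hc i))
      (by
        rw [Fintype.sum_option]
        show (1 - r⁻¹ * ∑ i, c i) + ∑ i, r⁻¹ * c i = 1
        rw [← Finset.mul_sum]
        ring)
      (fun o _ => by
        cases o with
        | none => exact subset_convexHull ℝ V h0
        | some i => exact subset_convexHull ℝ V (hv i))
    rw [Fintype.sum_option] at hs
    show r⁻¹ • ∑ i, c i • v i ∈ _
    rw [Finset.smul_sum]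
    have : ∀ i : ι, r⁻¹ • (c i • v i) = (r⁻¹ * c i) • v i := fun i => smul_smul _ _ _
    simp only [this]
    simpa using hs
  refine Set.mem_smul_set.2 ⟨_, key, ?_⟩
  rw [smul_inv_smul₀ hr.ne']

lemma stageK (K A l : ℝ) (h1 : 0 ≤ A) (h2 : A ≤ K) (h3 : 4*(K-A) ≤ l) (h4 : l ≤ 5*K - 4*A) :
    ∃ x7 x8 a9 a10 : ℝ, 0 ≤ x7 ∧ 0 ≤ x8 ∧ 0 ≤ a9 ∧ 0 ≤ a10 ∧
      x7 + x8 + a9 + a10 = K ∧ a9 + a10 = A ∧ 4*x7 + 5*x8 + a10 = l := by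
  rcases le_or_gt l (5*(K-A)) with hc | hc
  · exact ⟨5*(K-A) - l, l - 4*(K-A), A, 0, by linarith, by linarith, h1, le_refl 0,
      by ring, by ring, by ring⟩
  · exact ⟨0, K - A, 5*K - 4*A - l, l - 5*(K-A), le_refl 0, by linarith, by linarith,
      by linarith, by ring, by ring, by ring⟩

lemma stageB (h : ℕ) (hh : 1 ≤ h) (g L W : ℝ) (hg : 0 ≤ g) (hL : 0 ≤ L)
    (h1 : g - L ≤ W) (h2 : L - g ≤ W) (h3 : L ≤ (h:ℝ)*W) (h4 : g ≤ (h:ℝ)*W) :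
    ∃ ced cmid c4 c5 c6 : ℝ, 0 ≤ ced ∧ 0 ≤ cmid ∧ 0 ≤ c4 ∧ 0 ≤ c5 ∧ 0 ≤ c6 ∧
      ced + cmid + c4 + c5 + c6 ≤ W ∧
      cmid + (h:ℝ)*c4 + ((h:ℝ)-1)*c5 + (h:ℝ)*c6 = g ∧
      ced + (h:ℝ)*c4 + (h:ℝ)*c5 + ((h:ℝ)-1)*c6 = L := by
  have hhr : (1:ℝ) ≤ (h:ℝ) := by exact_mod_cast hh
  have hhp : (0:ℝ) < (h:ℝ) := by linarith
  rcases le_total g L with hgl | hgl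
  · rcases le_or_gt (((h:ℝ)-1)*L) ((h:ℝ)*g) with hcc | hcc
    · refine ⟨0, 0, ((h:ℝ)*g - ((h:ℝ)-1)*L)/(h:ℝ), L - g, 0, le_refl 0, le_refl 0,
        div_nonneg (by linarith) hhp.le, by linarith, le_refl 0, ?_, ?_, ?_⟩
      · have heq : (0:ℝ) + 0 + ((h:ℝ)*g - ((h:ℝ)-1)*L)/(h:ℝ) + (L - g) + 0 = L/(h:ℝ) := by
          field_simp; ring
        rw [heq, div_le_iff₀ hhp]
        nlinarith
      · field_simp; ring
      · field_simp; ring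
    · have hh2 : (2:ℝ) ≤ (h:ℝ) := by
        rcases Nat.lt_or_ge h 2 with hl | hl
        · exfalso
          have h1 : h = 1 := by omega
          subst h1
          simp at hcc
          linarith
        · exact_mod_cast hl
      have hm1 : (0:ℝ) < (h:ℝ) - 1 := by linarith
      refine ⟨(((h:ℝ)-1)*L - (h:ℝ)*g)/((h:ℝ)-1), 0, 0, g/((h:ℝ)-1), 0,
        div_nonneg (by linarith) hm1.le, le_refl 0, le_refl 0,
        div_nonneg hg hm1.le, le_refl 0, ?_, ?_, ?_⟩
      · have heq : (((h:ℝ)-1)*L - (h:ℝ)*g)/((h:ℝ)-1) + 0 + 0 + g/((h:ℝ)-1) + 0 = L - g := by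
          field_simp; ring
        rw [heq]; linarith
      · field_simp; ring
      · field_simp; ring
  · rcases le_or_gt (((h:ℝ)-1)*g) ((h:ℝ)*L) with hcc | hcc
    · refine ⟨0, 0, ((h:ℝ)*L - ((h:ℝ)-1)*g)/(h:ℝ), 0, g - L, le_refl 0, le_refl 0,
        div_nonneg (by linarith) hhp.le, le_refl 0, by linarith, ?_, ?_, ?_⟩
      · have heq : (0:ℝ) + 0 + ((h:ℝ)*L - ((h:ℝ)-1)*g)/(h:ℝ) + 0 + (g - L) = g/(h:ℝ) := by
          field_simp; ring
        rw [heq, div_le_iff₀ hhp]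
        nlinarith
      · field_simp; ring
      · field_simp; ring
    · have hh2 : (2:ℝ) ≤ (h:ℝ) := by
        rcases Nat.lt_or_ge h 2 with hl | hl
        · exfalso
          have h1 : h = 1 := by omega
          subst h1
          simp at hcc
          linarith
        · exact_mod_cast hl
      have hm1 : (0:ℝ) < (h:ℝ) - 1 := by linarith
      refine ⟨0, (((h:ℝ)-1)*g - (h:ℝ)*L)/((h:ℝ)-1), 0, 0, L/((h:ℝ)-1),
        le_refl 0, div_nonneg (by linarith) hm1.le, le_refl 0, le_refl 0,
        div_nonneg hL hm1.le, ?_, ?_, ?_⟩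
      · have heq : (0:ℝ) + (((h:ℝ)-1)*g - (h:ℝ)*L)/((h:ℝ)-1) + 0 + 0 + L/((h:ℝ)-1) = g - L := by
          field_simp; ring
        rw [heq]; linarith
      · field_simp; ring
      · field_simp; ring
set_option maxHeartbeats 1000000 in
theorem stmt_18 (h d n : ℕ) (hh : 1 ≤ h) (hd : 3 ≤ d) (hn : 3 ≤ n)
    (a : Fin d → ℤ)
    (hmem : castPt a ∈ (n : ℝ) • Phd h d)
    (h0 : 0 < a ⟨0, by omega⟩)
    (hkn : a ⟨0, by omega⟩ ≤ (n : ℤ))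
    (hdpos : 0 < a ⟨d - 1, by omega⟩)
    (hstrict : ∀ i : Fin d, 0 < i.val → i.val < d - 1 →
      0 < a i ∧
      -((d : ℤ) - 4) * a i + (midSumZ a - a i) - a ⟨d - 1, by omega⟩ < (n : ℤ) ∧
      4 * a ⟨0, by omega⟩ - 4 * a i - a ⟨d - 1, by omega⟩ < 0 ∧
      -4 * a ⟨0, by omega⟩ - a i + a ⟨d - 1, by omega⟩ < (n : ℤ) ∧
      a ⟨0, by omega⟩ - ((d : ℤ) - 3) * a i + (midSumZ a - a i) < (n : ℤ) ∧
      (5 * (h : ℤ) - 5) * a ⟨0, by omega⟩ - (((d : ℤ) - 3) * (5 * (h : ℤ) - 1) - 4) * a i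
        + (5 * (h : ℤ) - 1) * (midSumZ a - a i) + a ⟨d - 1, by omega⟩ < 5 * (h : ℤ) * n ∧
      ((h : ℤ) - 5) * a ⟨0, by omega⟩ - ((d : ℤ) - 3) * ((h : ℤ) - 1) * a i
        + ((h : ℤ) - 1) * (midSumZ a - a i) + a ⟨d - 1, by omega⟩ < (h : ℤ) * n ∧
      ((h : ℤ) - 1) * a ⟨0, by omega⟩ - (((d : ℤ) - 3) * (h : ℤ) - 1) * a i
        + (h : ℤ) * (midSumZ a - a i) < (h : ℤ) * n)
    (hd5 : 5 ≤ a ⟨d - 1, by omega⟩)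
    (hcond : ∀ i : Fin d, 0 < i.val → i.val < d - 1 →
      -((d : ℤ) - 4) * a i + (midSumZ a - a i) - a ⟨d - 1, by omega⟩ ≤ (n : ℤ) - 6) :
    castPt (a - (eOne d + (5 : ℤ) • eD d)) ∈ ((n : ℝ) - 1) • Phd h d := by
  have hd1 : 0 < d := by omega
  have hd1' : d - 1 < d := by omega
  set j0 : Fin d := ⟨0, hd1⟩ with hj0
  set jl : Fin d := ⟨d - 1, hd1'⟩ with hjl
  set mid : Finset (Fin d) :=
    Finset.univ.filter (fun j : Fin d => 0 < j.val ∧ j.val < d - 1) with hmiddef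
  have hmem_mid : ∀ j : Fin d, j ∈ mid ↔ (0 < j.val ∧ j.val < d - 1) := by
    intro j; simp [hmiddef]
  have hmidcard : mid.card = d - 2 := by
    have himg : mid.image Fin.val = Finset.Ioo 0 (d - 1) := by
      ext x
      simp only [Finset.mem_image, Finset.mem_Ioo, hmiddef, Finset.mem_filter,
        Finset.mem_univ, true_and]
      constructor
      · rintro ⟨j, ⟨h1, h2⟩, rfl⟩; exact ⟨h1, h2⟩
      · rintro ⟨h1, h2⟩; exact ⟨⟨x, by omega⟩, ⟨h1, h2⟩, rfl⟩
    have := Finset.card_image_of_injective mid (Fin.val_injective)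
    rw [himg] at this
    rw [← this, Nat.card_Ioo]
    omega
  have hmidne : mid.Nonempty := by
    refine ⟨⟨1, by omega⟩, ?_⟩
    rw [hmem_mid]
    constructor <;> simp <;> omega
  obtain ⟨i0, hi0mem, hi0min⟩ := Finset.exists_min_image mid a hmidne
  have hi0 : 0 < i0.val ∧ i0.val < d - 1 := (hmem_mid i0).1 hi0mem
  obtain ⟨hb1, _, zB0, zC0, zD0, zF0, zG0, zH0⟩ := hstrict i0 hi0.1 hi0.2
  have zA0 := hcond i0 hi0.1 hi0.2
  -- integer S
  set Sz : ℤ := ∑ j ∈ mid, (a j - a i0) with hSzdef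
  have hSznn : 0 ≤ Sz := Finset.sum_nonneg fun j hj => sub_nonneg.2 (hi0min j hj)
  have hM : midSumZ a = Sz + ((d : ℤ) - 2) * a i0 := by
    have h1 : Sz = (∑ j ∈ mid, a j) - mid.card • a i0 := by
      rw [hSzdef, Finset.sum_sub_distrib, Finset.sum_const]
    have h2 : (mid.card : ℤ) = (d : ℤ) - 2 := by
      rw [hmidcard]; push_cast; omega
    have h3 : midSumZ a = ∑ j ∈ mid, a j := rfl
    rw [h3]
    rw [h1, nsmul_eq_mul, h2]
    ring
  rw [hM] at zA0 zD0 zF0 zG0 zH0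
  -- integer inequalities
  have zA : Sz + a i0 - a jl ≤ (n : ℤ) - 6 := by linarith [zA0]
  have zB : 4 * a j0 - 4 * a i0 - a jl ≤ -1 := by linarith [zB0]
  have zC : -4 * a j0 - a i0 + a jl ≤ (n : ℤ) - 1 := by linarith [zC0]
  have zD : a j0 + Sz ≤ (n : ℤ) - 1 := by linarith [zD0]
  have zF : (5*(h:ℤ) - 5) * a j0 + (5*(h:ℤ) - 1) * Sz + 4 * a i0 + a jl
      ≤ 5*(h:ℤ)*n - 1 := by linarith [zF0]
  have zG : ((h:ℤ) - 5) * a j0 + ((h:ℤ) - 1) * Sz + a jl ≤ (h:ℤ)*n - 1 := by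
    linarith [zG0]
  have zH : ((h:ℤ) - 1) * a j0 + (h:ℤ) * Sz + a i0 ≤ (h:ℤ)*n - 1 := by
    linarith [zH0]
  -- real quantities
  have hhR : (1:ℝ) ≤ (h:ℝ) := by exact_mod_cast hh
  set k : ℝ := ((a j0 : ℤ) : ℝ) with hkdef
  set br : ℝ := ((a i0 : ℤ) : ℝ) with hbrdef
  set Dr : ℝ := ((a jl : ℤ) : ℝ) - 5 with hDrdef
  set Sr : ℝ := ((Sz : ℤ) : ℝ) with hSrdef
  set Kr : ℝ := k - 1 with hKrdef
  set Wr : ℝ := (n : ℝ) - k - Sr with hWrdef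
  have hk1 : 1 ≤ k := by rw [hkdef]; exact_mod_cast h0
  have hKr : 0 ≤ Kr := by rw [hKrdef]; linarith
  have hbr : 1 ≤ br := by rw [hbrdef]; exact_mod_cast hb1
  have hDr : 0 ≤ Dr := by
    rw [hDrdef]
    have : (5:ℝ) ≤ ((a jl : ℤ) : ℝ) := by exact_mod_cast hd5
    linarith
  have hSr : 0 ≤ Sr := by rw [hSrdef]; exact_mod_cast hSznn
  -- real versions of the inequalities
  have rA : Sr + br - (Dr + 5) ≤ (n:ℝ) - 6 := by
    rw [hSrdef, hbrdef, hDrdef]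
    have : ((Sz : ℤ) : ℝ) + ((a i0 : ℤ) : ℝ) - ((a jl : ℤ) : ℝ) ≤ (n:ℝ) - 6 := by
      exact_mod_cast zA
    linarith
  have rB : 4*k - 4*br - (Dr + 5) ≤ -1 := by
    rw [hkdef, hbrdef, hDrdef]
    have : 4*((a j0 : ℤ) : ℝ) - 4*((a i0 : ℤ) : ℝ) - ((a jl : ℤ) : ℝ) ≤ -1 := by
      exact_mod_cast zB
    linarith
  have rC : -4*k - br + (Dr + 5) ≤ (n:ℝ) - 1 := by
    rw [hkdef, hbrdef, hDrdef]
    have : -4*((a j0 : ℤ) : ℝ) - ((a i0 : ℤ) : ℝ) + ((a jl : ℤ) : ℝ) ≤ (n:ℝ) - 1 := by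
      exact_mod_cast zC
    linarith
  have hWr : 1 ≤ Wr := by
    rw [hWrdef, hkdef, hSrdef]
    have : ((a j0 : ℤ) : ℝ) + ((Sz : ℤ) : ℝ) ≤ (n:ℝ) - 1 := by exact_mod_cast zD
    linarith
  have rF : (5*(h:ℝ) - 5) * k + (5*(h:ℝ) - 1) * Sr + 4*br + (Dr + 5)
      ≤ 5*(h:ℝ)*(n:ℝ) - 1 := by
    rw [hkdef, hbrdef, hDrdef, hSrdef]
    have : (5*(h:ℝ) - 5) * ((a j0 : ℤ) : ℝ) + (5*(h:ℝ) - 1) * ((Sz : ℤ) : ℝ)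
        + 4*((a i0 : ℤ) : ℝ) + ((a jl : ℤ) : ℝ) ≤ 5*(h:ℝ)*(n:ℝ) - 1 := by
      exact_mod_cast zF
    linarith
  have rG : ((h:ℝ) - 5) * k + ((h:ℝ) - 1) * Sr + (Dr + 5) ≤ (h:ℝ)*(n:ℝ) - 1 := by
    rw [hkdef, hDrdef, hSrdef]
    have : ((h:ℝ) - 5) * ((a j0 : ℤ) : ℝ) + ((h:ℝ) - 1) * ((Sz : ℤ) : ℝ)
        + ((a jl : ℤ) : ℝ) ≤ (h:ℝ)*(n:ℝ) - 1 := by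
      exact_mod_cast zG
    linarith
  have rH : ((h:ℝ) - 1) * k + (h:ℝ) * Sr + br ≤ (h:ℝ)*(n:ℝ) - 1 := by
    rw [hkdef, hbrdef, hSrdef]
    have : ((h:ℝ) - 1) * ((a j0 : ℤ) : ℝ) + (h:ℝ) * ((Sz : ℤ) : ℝ)
        + ((a i0 : ℤ) : ℝ) ≤ (h:ℝ)*(n:ℝ) - 1 := by
      exact_mod_cast zH
    linarith
  have hWmul : (h:ℝ)*Wr = (h:ℝ)*(n:ℝ) - (h:ℝ)*k - (h:ℝ)*Sr := by
    rw [hWrdef]; ring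
  have hW0 : (0:ℝ) ≤ Wr := by linarith
  have hhW0 : (0:ℝ) ≤ (h:ℝ)*Wr := mul_nonneg (by linarith) hW0
  -- the parameter A
  set Ar : ℝ := max (max 0 (Kr - Dr/4)) (max ((4*Kr + br - Wr - Dr)/5) (br - (h:ℝ)*Wr))
    with hArdef
  have hAl0 : (0:ℝ) ≤ Ar := le_max_of_le_left (le_max_left _ _)
  have hAl1 : Kr - Dr/4 ≤ Ar := le_max_of_le_left (le_max_right _ _)
  have hAl2 : (4*Kr + br - Wr - Dr)/5 ≤ Ar := le_max_of_le_right (le_max_left _ _)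
  have hAl3 : br - (h:ℝ)*Wr ≤ Ar := le_max_of_le_right (le_max_right _ _)
  have hAK : Ar ≤ Kr := by
    rw [hArdef]
    refine max_le (max_le hKr (by linarith)) (max_le (by linarith) (by linarith))
  have hAb : Ar ≤ br := by
    rw [hArdef]
    refine max_le (max_le (by linarith) (by linarith)) (max_le (by linarith) (by linarith))
  have hA4 : Ar ≤ ((h:ℝ)*Wr + Sr + 5*Kr - Dr)/4 := by
    rw [hArdef]
    refine max_le (max_le (by linarith) (by linarith)) (max_le (by linarith) (by linarith))
  have hA5 : Ar ≤ (Wr + br + Sr + 5*Kr - Dr)/5 := by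
    rw [hArdef]
    refine max_le (max_le (by linarith) (by linarith)) (max_le (by linarith) (by linarith))
  -- the parameter L
  set Lr : ℝ := max (max 0 (br - Ar - Wr)) (Dr - 5*Kr + 4*Ar - Sr) with hLrdef
  have hLr0 : (0:ℝ) ≤ Lr := le_max_of_le_left (le_max_left _ _)
  have hLl2 : br - Ar - Wr ≤ Lr := le_max_of_le_left (le_max_right _ _)
  have hLl3 : Dr - 5*Kr + 4*Ar - Sr ≤ Lr := le_max_right _ _
  have hLhW : Lr ≤ (h:ℝ)*Wr := by
    rw [hLrdef]
    refine max_le (max_le hhW0 (by linarith)) (by linarith)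
  have hLWg : Lr ≤ Wr + br - Ar := by
    rw [hLrdef]
    refine max_le (max_le (by linarith) (by linarith)) (by linarith)
  have hLD4 : Lr ≤ Dr - 4*(Kr - Ar) := by
    rw [hLrdef]
    refine max_le (max_le (by linarith) (by linarith)) (by linarith)
  -- the parameter l and t
  set lr : ℝ := min (5*Kr - 4*Ar) (Dr - Lr) with hlrdef
  have hl1 : 4*(Kr - Ar) ≤ lr := le_min (by linarith) (by linarith)
  have hl2 : lr ≤ 5*Kr - 4*Ar := min_le_left _ _
  have hlDL : lr ≤ Dr - Lr := min_le_right _ _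
  have hlts : Dr - Lr - Sr ≤ lr := le_min (by linarith) (by linarith)
  set tr : ℝ := Dr - Lr - lr with htrdef
  have htr0 : 0 ≤ tr := by rw [htrdef]; linarith
  have htrS : tr ≤ Sr := by rw [htrdef]; linarith
  -- g
  set gr : ℝ := br - Ar with hgrdef
  have hg0 : 0 ≤ gr := by rw [hgrdef]; linarith
  have hgW : gr ≤ (h:ℝ)*Wr := by rw [hgrdef]; linarith
  have hgLW : gr - Lr ≤ Wr := by rw [hgrdef]; linarith
  have hLgW : Lr - gr ≤ Wr := by rw [hgrdef]; linarith
  -- stage decompositions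
  obtain ⟨x7, x8, a9, a10, hx7, hx8, ha9, ha10, hKsum, hAsum, hlsum⟩ :=
    stageK Kr Ar lr hAl0 hAK hl1 hl2
  obtain ⟨ced, cmid, c4, c5, c6, hced, hcmid, hc4, hc5, hc6, hBsum, hBg, hBL⟩ :=
    stageB h hh gr Lr Wr hg0 hLr0 hgLW hLgW hLhW hgW
  -- per-coordinate weights on the e_i / e_i + e_d vertices
  set tI : Fin d → ℝ := fun j => if j ∈ mid then
      (if Sz = 0 then 0 else tr * (((a j : ℤ):ℝ) - br) / Sr) else 0 with htIdef
  set cI : Fin d → ℝ := fun j =>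
      (if j ∈ mid then (((a j : ℤ):ℝ) - br) else 0) - tI j with hcIdef
  have hajbr : ∀ j ∈ mid, br ≤ ((a j : ℤ):ℝ) := by
    intro j hj
    rw [hbrdef]
    exact_mod_cast hi0min j hj
  have hSrpos : Sz ≠ 0 → 0 < Sr := by
    intro hne
    rw [hSrdef]
    have : 0 < Sz := lt_of_le_of_ne hSznn (Ne.symm hne)
    exact_mod_cast this
  have htInn : ∀ j, 0 ≤ tI j := by
    intro j
    rw [htIdef]
    dsimp only
    split
    · split
      · exact le_refl 0
      · next hmemj hne =>
        have hSp := hSrpos hne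
        have hx := hajbr j hmemj
        exact div_nonneg (mul_nonneg htr0 (by linarith only [hx])) hSp.le
    · exact le_refl 0
  have htIle : ∀ j ∈ mid, tI j ≤ ((a j : ℤ):ℝ) - br := by
    intro j hj
    rw [htIdef]
    dsimp only
    rw [if_pos hj]
    split
    · next hSe =>
      have : Sr = 0 := by rw [hSrdef, hSe]; simp
      linarith only [hajbr j hj, this, htr0, htrS]
    · next hne =>
      have hSp := hSrpos hne
      rw [div_le_iff₀ hSp]
      have h1 : 0 ≤ ((a j : ℤ):ℝ) - br := by linarith only [hajbr j hj]
      have h2 := mul_le_mul_of_nonneg_right htrS h1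
      nlinarith only [h1, h2, htr0, hSp]
  have hcInn : ∀ j, 0 ≤ cI j := by
    intro j
    rw [hcIdef]
    dsimp only
    by_cases hj : j ∈ mid
    · rw [if_pos hj]
      linarith only [htIle j hj]
    · rw [if_neg hj]
      have : tI j = 0 := by rw [htIdef]; dsimp only; rw [if_neg hj]
      rw [this]
      linarith only []
  have htI0 : ∀ j, j ∉ mid → tI j = 0 := by
    intro j hj; rw [htIdef]; dsimp only; rw [if_neg hj]
  have hcI0 : ∀ j, j ∉ mid → cI j = 0 := by
    intro j hj; rw [hcIdef]; dsimp only; rw [if_neg hj, htI0 j hj]; ring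
  have hSrsum : ∑ j ∈ mid, (((a j : ℤ):ℝ) - br) = Sr := by
    rw [hSrdef, hSzdef, hbrdef]
    push_cast
    rfl
  have htIsum : ∑ j ∈ mid, tI j = tr := by
    by_cases hSe : Sz = 0
    · have htr : tr = 0 := by
        have : Sr = 0 := by rw [hSrdef, hSe]; simp
        linarith
      rw [htr]
      apply Finset.sum_eq_zero
      intro j hj
      rw [htIdef]
      dsimp only
      rw [if_pos hj, if_pos hSe]
    · have hSp := hSrpos hSe
      have : ∑ j ∈ mid, tI j = ∑ j ∈ mid, tr * (((a j : ℤ):ℝ) - br) / Sr := by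
        apply Finset.sum_congr rfl
        intro j hj
        rw [htIdef]
        dsimp only
        rw [if_pos hj, if_neg hSe]
      rw [this]
      rw [← Finset.sum_div, ← Finset.mul_sum, hSrsum]
      field_simp
  have hcIsum : ∑ j ∈ mid, cI j = Sr - tr := by
    have : ∑ j ∈ mid, cI j = ∑ j ∈ mid, ((((a j : ℤ):ℝ) - br) - tI j) := by
      apply Finset.sum_congr rfl
      intro j hj
      rw [hcIdef]
      dsimp only
      rw [if_pos hj]
    rw [this, Finset.sum_sub_distrib, hSrsum, htIsum]
  -- the vertex family
  have h0vert : (0 : Fin d → ℤ) ∈ PhdVerts h d := Or.inl (by left; rfl)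
  have hcast0 : castPt (0 : Fin d → ℤ) = (0 : Fin d → ℝ) := by
    funext j; simp [castPt]
  have h0img : (0 : Fin d → ℝ) ∈ castPt '' PhdVerts h d := ⟨0, h0vert, hcast0⟩
  set cc : (Fin 9 ⊕ (Fin d × Bool)) → ℝ := Sum.elim
      ![ced, cmid, c4, c5, c6, x7, x8, a9, a10]
      (fun p => if p.2 then tI p.1 else cI p.1) with hccdef
  set vv : (Fin 9 ⊕ (Fin d × Bool)) → (Fin d → ℝ) := Sum.elim
      ![castPt (eD d), castPt (eMid d), castPt ((h:ℤ) • (eMid d + eD d)),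
        castPt (((h:ℤ) - 1) • eMid d + (h:ℤ) • eD d),
        castPt ((h:ℤ) • eMid d + ((h:ℤ) - 1) • eD d),
        castPt (eOne d + (4:ℤ) • eD d), castPt (eOne d + (5:ℤ) • eD d),
        castPt (eOne d + eMid d), castPt (eOne d + eMid d + eD d)]
      (fun p => if p.1 ∈ mid then
          (if p.2 then castPt (eV d p.1.val + eD d) else castPt (eV d p.1.val)) else 0)
    with hvvdef
  have hcc0 : ∀ i, 0 ≤ cc i := by
    rintro (i | ⟨j, b⟩)
    · fin_cases i
      · exact hced
      · exact hcmid
      · exact hc4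
      · exact hc5
      · exact hc6
      · exact hx7
      · exact hx8
      · exact ha9
      · exact ha10
    · show (0:ℝ) ≤ if b then tI j else cI j
      cases b
      · exact hcInn j
      · exact htInn j
  have hvmem : ∀ i, vv i ∈ castPt '' PhdVerts h d := by
    rintro (i | ⟨j, b⟩)
    · fin_cases i
      · exact ⟨eD d, Or.inl (Set.mem_insert_of_mem _ (Set.mem_insert _ _)), rfl⟩
      · exact ⟨eMid d, Or.inl (Set.mem_insert_of_mem _ (Set.mem_insert_of_mem _
          (Set.mem_insert _ _))), rfl⟩
      · exact ⟨(h:ℤ) • (eMid d + eD d), Or.inl (Set.mem_insert_of_mem _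
          (Set.mem_insert_of_mem _ (Set.mem_insert_of_mem _ (Set.mem_insert _ _)))), rfl⟩
      · exact ⟨((h:ℤ) - 1) • eMid d + (h:ℤ) • eD d, Or.inl (Set.mem_insert_of_mem _
          (Set.mem_insert_of_mem _ (Set.mem_insert_of_mem _ (Set.mem_insert_of_mem _
          (Set.mem_insert _ _))))), rfl⟩
      · exact ⟨(h:ℤ) • eMid d + ((h:ℤ) - 1) • eD d, Or.inl (Set.mem_insert_of_mem _
          (Set.mem_insert_of_mem _ (Set.mem_insert_of_mem _ (Set.mem_insert_of_mem _
          (Set.mem_insert_of_mem _ (Set.mem_insert _ _)))))), rfl⟩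
      · exact ⟨eOne d + (4:ℤ) • eD d, Or.inl (Set.mem_insert_of_mem _
          (Set.mem_insert_of_mem _ (Set.mem_insert_of_mem _ (Set.mem_insert_of_mem _
          (Set.mem_insert_of_mem _ (Set.mem_insert_of_mem _ (Set.mem_insert _ _))))))), rfl⟩
      · exact ⟨eOne d + (5:ℤ) • eD d, Or.inl (Set.mem_insert_of_mem _
          (Set.mem_insert_of_mem _ (Set.mem_insert_of_mem _ (Set.mem_insert_of_mem _
          (Set.mem_insert_of_mem _ (Set.mem_insert_of_mem _ (Set.mem_insert_of_mem _
          (Set.mem_insert _ _)))))))), rfl⟩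
      · exact ⟨eOne d + eMid d, Or.inl (Set.mem_insert_of_mem _
          (Set.mem_insert_of_mem _ (Set.mem_insert_of_mem _ (Set.mem_insert_of_mem _
          (Set.mem_insert_of_mem _ (Set.mem_insert_of_mem _ (Set.mem_insert_of_mem _
          (Set.mem_insert_of_mem _ (Set.mem_insert _ _))))))))), rfl⟩
      · exact ⟨eOne d + eMid d + eD d, Or.inl (Set.mem_insert_of_mem _
          (Set.mem_insert_of_mem _ (Set.mem_insert_of_mem _ (Set.mem_insert_of_mem _
          (Set.mem_insert_of_mem _ (Set.mem_insert_of_mem _ (Set.mem_insert_of_mem _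
          (Set.mem_insert_of_mem _ (Set.mem_insert_of_mem _
          (Set.mem_singleton _)))))))))), rfl⟩
    · show (if j ∈ mid then (if b then castPt (eV d j.val + eD d) else castPt (eV d j.val))
          else 0) ∈ castPt '' PhdVerts h d
      by_cases hj : j ∈ mid
      · rw [if_pos hj]
        obtain ⟨hj1, hj2⟩ := (hmem_mid j).1 hj
        cases b
        · exact ⟨eV d j.val, Or.inr ⟨j, hj1, hj2, Or.inl rfl⟩, rfl⟩
        · exact ⟨eV d j.val + eD d, Or.inr ⟨j, hj1, hj2, Or.inr rfl⟩, rfl⟩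
      · rw [if_neg hj]
        exact h0img
  have hccsum : ∑ i, cc i ≤ (n:ℝ) - 1 := by
    rw [Fintype.sum_sum_type]
    have h9 : ∑ i : Fin 9, cc (Sum.inl i)
        = ced + cmid + c4 + c5 + c6 + x7 + x8 + a9 + a10 := by
      simp [hccdef, Fin.sum_univ_succ]
      ring
    have hbools : ∀ j : Fin d, ∑ b : Bool, cc (Sum.inr (j, b)) = cI j + tI j := by
      intro j
      rw [Fintype.sum_bool]
      simp [hccdef]
      ring
    have hP : ∑ p : Fin d × Bool, cc (Sum.inr p) = Sr := by
      rw [Fintype.sum_prod_type]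
      simp only [hbools]
      rw [← Finset.sum_subset (Finset.subset_univ mid)
        (fun x _ hx => by rw [hcI0 x hx, htI0 x hx]; ring)]
      rw [Finset.sum_add_distrib, hcIsum, htIsum]
      ring
    rw [h9, hP]
    have hWKS : Wr + Kr + Sr = (n:ℝ) - 1 := by
      rw [hWrdef, hKrdef]; ring
    linarith only [hBsum, hKsum, hWKS]
  have hnpos : (0:ℝ) < (n:ℝ) - 1 := by
    have : (3:ℝ) ≤ (n:ℝ) := by exact_mod_cast hn
    linarith
  have key := mem_smul_convexHull (castPt '' PhdVerts h d) h0img hnpos cc vv hcc0 hvmem hccsum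
  have hveq : castPt (a - (eOne d + (5:ℤ) • eD d)) = ∑ i, cc i • vv i := by
    have hsa : ∀ j : Fin d, (∑ i, cc i • vv i) j
        = (∑ i : Fin 9, cc (Sum.inl i) * vv (Sum.inl i) j)
          + ∑ p : Fin d × Bool, cc (Sum.inr p) * vv (Sum.inr p) j := by
      intro j
      rw [Finset.sum_apply, Fintype.sum_sum_type]
      simp [Pi.smul_apply]
    funext j
    rw [hsa]
    by_cases hj1 : j.val = 0
    · -- first coordinate
      have hj0eq : j = j0 := Fin.ext (by rw [hj1, hj0])
      have hne1' : ¬((0:ℕ) = d - 1) := by omega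
      have hinl : (∑ i : Fin 9, cc (Sum.inl i) * vv (Sum.inl i) j)
          = x7 + x8 + a9 + a10 := by
        simp [hccdef, hvvdef, Fin.sum_univ_succ, castPt, eD, eMid, eOne, eV, hj1, hne1']
        ring
      have hinr : (∑ p : Fin d × Bool, cc (Sum.inr p) * vv (Sum.inr p) j) = 0 := by
        rw [Fintype.sum_prod_type]
        apply Finset.sum_eq_zero
        intro j' _
        rw [Fintype.sum_bool]
        by_cases hj' : j' ∈ mid
        · obtain ⟨h1, h2⟩ := (hmem_mid j').1 hj'
          have hne : ¬((0:ℕ) = j'.val) := by omega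
          simp [hccdef, hvvdef, hj', castPt, eV, eD, hj1, hne, hne1']
        · simp [hccdef, hvvdef, hj']
      have hlhs : castPt (a - (eOne d + (5:ℤ) • eD d)) j = ((a j : ℤ):ℝ) - 1 := by
        simp [castPt, eOne, eD, eV, hj1, hne1']
      rw [hinl, hinr, hlhs, hj0eq]
      have hk' : k = ((a j0 : ℤ):ℝ) := hkdef
      linarith only [hKsum, hk', hKrdef]
    · by_cases hj2 : j.val = d - 1
      · -- last coordinate
        have hjleq : j = jl := Fin.ext (by rw [hj2, hjl])
        have hne0' : ¬(d - 1 = 0) := by omega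
        have hnm : ¬(d - 1 < d - 1) := by omega
        have hinl : (∑ i : Fin 9, cc (Sum.inl i) * vv (Sum.inl i) j)
            = ced + c4*(h:ℝ) + c5*(h:ℝ) + c6*((h:ℝ)-1) + x7*4 + x8*5 + a10 := by
          simp [hccdef, hvvdef, Fin.sum_univ_succ, castPt, eD, eMid, eOne, eV, hj2,
            hne0', hnm]
          push_cast
          ring
        have hinr : (∑ p : Fin d × Bool, cc (Sum.inr p) * vv (Sum.inr p) j) = tr := by
          rw [Fintype.sum_prod_type]
          have hterm : ∀ j' : Fin d,
              (∑ b : Bool, cc (Sum.inr (j', b)) * vv (Sum.inr (j', b)) j) = tI j' := by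
            intro j'
            rw [Fintype.sum_bool]
            by_cases hj' : j' ∈ mid
            · obtain ⟨h1, h2⟩ := (hmem_mid j').1 hj'
              have hne : ¬(d - 1 = j'.val) := by omega
              simp [hccdef, hvvdef, hj', castPt, eV, eD, hj2, hne]
            · simp [hccdef, hvvdef, hj', htI0 j' hj', hcI0 j' hj']
          simp only [hterm]
          rw [← Finset.sum_subset (Finset.subset_univ mid) (fun x _ hx => htI0 x hx)]
          exact htIsum
        have hlhs : castPt (a - (eOne d + (5:ℤ) • eD d)) j = ((a j : ℤ):ℝ) - 5 := by
          simp [castPt, eOne, eD, eV, hj2, hne0']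
        rw [hinl, hinr, hlhs, hjleq]
        have hD' : Dr = ((a jl : ℤ):ℝ) - 5 := hDrdef
        linarith only [hBL, hlsum, htrdef, hD']
      · -- middle coordinate
        have hjm : j ∈ mid := by
          rw [hmem_mid]
          have := j.isLt
          omega
        have hj1' : 0 < j.val := by omega
        have hj2' : j.val < d - 1 := by
          have := j.isLt
          omega
        have hinl : (∑ i : Fin 9, cc (Sum.inl i) * vv (Sum.inl i) j)
            = cmid + c4*(h:ℝ) + c5*((h:ℝ)-1) + c6*(h:ℝ) + a9 + a10 := by
          simp [hccdef, hvvdef, Fin.sum_univ_succ, castPt, eD, eMid, eOne, eV, hj1, hj2,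
            hj1', hj2']
          push_cast
          ring
        have hinr : (∑ p : Fin d × Bool, cc (Sum.inr p) * vv (Sum.inr p) j)
            = ((a j : ℤ):ℝ) - br := by
          rw [Fintype.sum_prod_type]
          rw [Finset.sum_eq_single_of_mem j (Finset.mem_univ j)]
          · rw [Fintype.sum_bool]
            have h11 : cI j + tI j = ((a j : ℤ):ℝ) - br := by
              rw [hcIdef]
              dsimp only
              rw [if_pos hjm]
              ring
            simp [hccdef, hvvdef, hjm, castPt, eV, eD, hj2]
            linarith only [h11]
          · intro j' _ hne
            rw [Fintype.sum_bool]
            by_cases hj' : j' ∈ mid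
            · have hnv : ¬(j.val = j'.val) := fun e => hne (Fin.ext e).symm
              simp [hccdef, hvvdef, hj', castPt, eV, eD, hj2, hnv]
            · simp [hccdef, hvvdef, hj', htI0 j' hj', hcI0 j' hj']
        have hlhs : castPt (a - (eOne d + (5:ℤ) • eD d)) j = ((a j : ℤ):ℝ) := by
          simp [castPt, eOne, eD, eV, hj1, hj2]
        rw [hinl, hinr, hlhs]
        have hb' : br = ((a i0 : ℤ):ℝ) := hbrdef
        linarith only [hBg, hAsum, hgrdef]
  rw [hveq]
  exact key
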